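/- Let Λ be a finite simple graph in which every vertex has degree at least 3, and suppose Λ contains a cycle of length m. Then there exists a positive integer n such that Λ contains an arc-cycle of length n and an arc-cycle of length m + n − 2. -/

import Mathlib

/-- `a 0, a 1, ..., a s` is an `s`-arc of `Λ`: a walk of length `s` in which no
two of any three consecutive vertices coincide. -/
def IsArc {V : Type*} (Λ : SimpleGraph V) (s : ℕ) (a : ℕ → V) : Prop :=
  (∀ i < s, Λ.Adj (a i) (a (i + 1))) ∧ ∀ i, i + 2 ≤ s → a (i + 2) ≠ a i

/-- `a 0, a 1, ..., a s` is an arc-cycle of `Λ` of length `s`: a closed walk of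
positive length which is an `s`-arc and moreover `a (s-1) ≠ a 1`. -/
def IsArcCycle {V : Type*} (Λ : SimpleGraph V) (s : ℕ) (a : ℕ → V) : Prop :=
  1 ≤ s ∧ IsArc Λ s a ∧ a s = a 0 ∧ a (s - 1) ≠ a 1

namespace ArcCycleAux

open SimpleGraph

variable {V : Type*} {Λ : SimpleGraph V}

/-- One non-backtracking step between darts. -/
def Step (Λ : SimpleGraph V) (d e : Λ.Dart) : Prop :=
  e.fst = d.snd ∧ e.snd ≠ d.fst

/-- Non-backtracking reachability between darts. -/
def Reach (Λ : SimpleGraph V) : Λ.Dart → Λ.Dart → Prop :=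
  Relation.ReflTransGen (Step Λ)

/-- In a graph of minimum degree at least 3, from any dart one can reach the
reverse dart by a non-backtracking walk. -/
lemma reach_symm [Fintype V] [DecidableRel Λ.Adj] (hdeg : ∀ v : V, 3 ≤ Λ.degree v)
    (d : Λ.Dart) : Reach Λ d d.symm := by
  classical
  by_contra hcon
  set T : Finset Λ.Dart :=
    Finset.univ.filter (fun e => Reach Λ d e ∧ ¬ Reach Λ d e.symm) with hT
  have hmemT : ∀ e : Λ.Dart, e ∈ T ↔ Reach Λ d e ∧ ¬ Reach Λ d e.symm := by
    intro e; simp [hT]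
  have hd : d ∈ T := (hmemT d).2 ⟨Relation.ReflTransGen.refl, hcon⟩
  -- propagation of membership in `T` along non-backtracking steps
  have prop1 : ∀ e ∈ T, ∀ (w : V) (h : Λ.Adj e.snd w), w ≠ e.fst →
      (⟨(e.snd, w), h⟩ : Λ.Dart) ∈ T := by
    intro e he w h hw
    obtain ⟨hre, hrs⟩ := (hmemT e).1 he
    refine (hmemT _).2 ⟨hre.tail ⟨rfl, hw⟩, ?_⟩
    intro hr
    exact hrs (hr.tail ⟨rfl, fun hc => hw (congrArg id hc).symm⟩)
  -- uniqueness of the reachable dart into a given head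
  have prop2 : ∀ e ∈ T, ∀ f : Λ.Dart, Reach Λ d f → f.snd = e.snd → f = e := by
    intro e he f hrf hsnd
    by_contra hne
    have hfst : f.fst ≠ e.fst := by
      intro hc
      exact hne (Dart.ext f e (Prod.ext hc hsnd))
    have : Reach Λ d e.symm := hrf.tail ⟨hsnd.symm, fun hc => hfst hc.symm⟩
    exact ((hmemT e).1 he).2 this
  set H : Finset V := T.image (fun e => e.snd) with hH
  have hTH : T.card = H.card := by
    rw [hH]
    refine (Finset.card_image_of_injOn ?_).symm
    intro e he f hf hef
    exact prop2 f hf e ((hmemT e).1 he).1 hef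
  have hfiber : ∀ b ∈ H, 2 ≤ (T.filter (fun f => f.fst = b)).card := by
    intro b hb
    obtain ⟨e, heT, rfl⟩ := Finset.mem_image.1 hb
    have hmemN : e.fst ∈ Λ.neighborFinset e.snd := by
      rw [mem_neighborFinset]; exact e.adj.symm
    have hcard : 2 ≤ ((Λ.neighborFinset e.snd).erase e.fst).card := by
      rw [Finset.card_erase_of_mem hmemN]
      have := hdeg e.snd
      rw [degree] at this
      omega
    refine le_trans hcard (Finset.card_le_card_of_injOn
      (fun w => if h : Λ.Adj e.snd w then (⟨(e.snd, w), h⟩ : Λ.Dart) else d) ?_ ?_)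
    · intro w hw
      rw [Finset.mem_coe, Finset.mem_erase, mem_neighborFinset] at hw
      simp only [dif_pos hw.2]
      exact Finset.mem_filter.2 ⟨prop1 e heT w hw.2 hw.1, rfl⟩
    · intro w hw w' hw' hww
      rw [Finset.mem_coe, Finset.mem_erase, mem_neighborFinset] at hw hw'
      simp only [dif_pos hw.2, dif_pos hw'.2] at hww
      simpa using congrArg (fun x : Λ.Dart => x.toProd.2) hww
  -- count
  have hmaps : ∀ x ∈ T.filter (fun f => f.fst ∈ H), (fun e : Λ.Dart => e.fst) x ∈ H := by
    intro x hx; exact (Finset.mem_filter.1 hx).2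
  have hkey := Finset.card_eq_sum_card_fiberwise hmaps
  have hfib_eq : ∀ b ∈ H,
      ((T.filter (fun f => f.fst ∈ H)).filter (fun x => x.fst = b)) =
        T.filter (fun f => f.fst = b) := by
    intro b hb
    ext x
    simp only [Finset.mem_filter]
    constructor
    · rintro ⟨⟨hx, _⟩, hxb⟩; exact ⟨hx, hxb⟩
    · rintro ⟨hx, hxb⟩; exact ⟨⟨hx, hxb ▸ hb⟩, hxb⟩
  have hsum : 2 * H.card ≤ (T.filter (fun f => f.fst ∈ H)).card := by
    rw [hkey]
    calc 2 * H.card = ∑ _b ∈ H, 2 := by rw [Finset.sum_const]; ring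
    _ ≤ ∑ b ∈ H, ((T.filter (fun f => f.fst ∈ H)).filter (fun x => x.fst = b)).card := by
        refine Finset.sum_le_sum ?_
        intro b hb
        rw [hfib_eq b hb]
        exact hfiber b hb
  have hle : (T.filter (fun f => f.fst ∈ H)).card ≤ T.card :=
    Finset.card_le_card (Finset.filter_subset _ _)
  have hHpos : 0 < H.card := by
    refine Finset.card_pos.2 ⟨d.snd, ?_⟩
    exact Finset.mem_image.2 ⟨d, hd, rfl⟩
  omega

/-- From a dart one can reach any dart whose tail is the head of the first. -/
lemma reach_head [Fintype V] [DecidableRel Λ.Adj] (hdeg : ∀ v : V, 3 ≤ Λ.degree v)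
    (d e : Λ.Dart) (h : e.fst = d.snd) : Reach Λ d e := by
  by_cases hc : e.snd = d.fst
  · have : e = d.symm := Dart.ext e d.symm (Prod.ext h hc)
    rw [this]
    exact reach_symm hdeg d
  · exact Relation.ReflTransGen.single ⟨h, hc⟩

/-- Non-backtracking reachability between any two darts joined by a walk. -/
lemma reach_of_walk [Fintype V] [DecidableRel Λ.Adj] (hdeg : ∀ v : V, 3 ≤ Λ.degree v) :
    ∀ {u w : V} (_ : Λ.Walk u w) (d e : Λ.Dart), d.snd = u → e.fst = w → Reach Λ d e := by
  intro u w p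
  induction p with
  | nil =>
    intro d e hd he
    exact reach_head hdeg d e (he.trans hd.symm)
  | @cons x y z h q ih =>
    intro d e hd he
    have h1 : Reach Λ d ⟨(x, y), h⟩ := reach_head hdeg d _ hd.symm
    exact h1.trans (ih ⟨(x, y), h⟩ e rfl he)

/-- Extract an explicit arc from a reachability proof. -/
lemma exists_arc_of_reach (d e : Λ.Dart) (h : Reach Λ d e) :
    ∃ (k : ℕ) (f : ℕ → V), IsArc Λ (k + 1) f ∧ f 0 = d.fst ∧ f 1 = d.snd ∧
      f k = e.fst ∧ f (k + 1) = e.snd := by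
  induction h with
  | refl =>
    refine ⟨0, fun i => if i = 0 then d.fst else d.snd, ⟨?_, ?_⟩, by simp, by simp, by simp, by simp⟩
    · intro i hi
      interval_cases i
      simpa using d.adj
    · intro i hi; omega
  | @tail b c hreach hstep ih =>
    obtain ⟨k, f, ⟨hadj, hnb⟩, h0, h1, hk, hk1⟩ := ih
    obtain ⟨hc1, hc2⟩ := hstep
    refine ⟨k + 1, fun i => if i = k + 2 then c.snd else f i, ⟨?_, ?_⟩, ?_, ?_, ?_, ?_⟩
    · intro i hi
      by_cases hik : i < k + 1
      · have e1 : i ≠ k + 2 := by omega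
        have e2 : i + 1 ≠ k + 2 := by omega
        simp only [if_neg e1, if_neg e2]
        exact hadj i hik
      · have e1 : ¬ (i = k + 2) := by omega
        have e2 : i + 1 = k + 2 := by omega
        have e3 : i = k + 1 := by omega
        simp only [if_neg e1, if_pos e2]
        rw [e3, hk1, ← hc1]
        exact c.adj
    · intro i hi
      by_cases hik : i + 2 ≤ k + 1
      · have e1 : i ≠ k + 2 := by omega
        have e2 : i + 2 ≠ k + 2 := by omega
        simp only [if_neg e1, if_neg e2]
        exact hnb i hik
      · have e1 : i + 2 = k + 2 := by omega
        have e2 : ¬ (i = k + 2) := by omega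
        have e3 : i = k := by omega
        simp only [if_pos e1, if_neg e2]
        rw [e3, hk]
        exact hc2
    · have e1 : (0 : ℕ) ≠ k + 2 := by omega
      simp only [if_neg e1]; exact h0
    · have e1 : (1 : ℕ) ≠ k + 2 := by omega
      simp only [if_neg e1]; exact h1
    · have e1 : k + 1 ≠ k + 2 := by omega
      simp only [if_neg e1]
      rw [hk1, ← hc1]
    · simp

/-- `getVert` and indexing into the support agree. -/
lemma support_getElem? {u v : V} (p : Λ.Walk u v) : ∀ (i : ℕ), i ≤ p.length →
    p.support[i]? = some (p.getVert i) := by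
  induction p with
  | nil =>
    intro i hi
    have hi0 : i = 0 := by simpa using hi
    subst hi0
    rfl
  | cons h q ih =>
    intro i hi
    cases i with
    | zero => simp [SimpleGraph.Walk.support_cons, SimpleGraph.Walk.getVert_zero]
    | succ n =>
      rw [Walk.support_cons, List.getElem?_cons_succ, Walk.getVert_cons_succ]
      exact ih n (by simpa [Walk.length_cons] using hi)

/-- On a cycle, `getVert` is injective on indices in `[1, length]`. -/
lemma cycle_getVert_inj {v : V} {c : Λ.Walk v v} (hc : c.IsCycle) {i j : ℕ}
    (hi1 : 1 ≤ i) (hi2 : i ≤ c.length) (hj1 : 1 ≤ j) (hj2 : j ≤ c.length)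
    (hij : c.getVert i = c.getVert j) : i = j := by
  have hlen : c.support.tail.length = c.length := by
    have := c.length_support
    have h2 : c.support.length = c.support.tail.length + 1 := by
      rw [c.support_eq_cons]; simp
    omega
  have key : ∀ n : ℕ, 1 ≤ n → n ≤ c.length →
      c.support.tail[n - 1]? = some (c.getVert n) := by
    intro n h1 h2
    have := support_getElem? c n h2
    rw [c.support_eq_cons] at this
    obtain ⟨n', rfl⟩ : ∃ n', n = n' + 1 := ⟨n - 1, by omega⟩
    rw [List.getElem?_cons_succ] at this
    simpa using this
  have h1 := key i hi1 hi2
  have h2 := key j hj1 hj2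
  rw [hij] at h1
  have := (List.getElem?_inj (by omega : i - 1 < c.support.tail.length)
    hc.support_nodup).1 (h1.trans h2.symm)
  omega

end ArcCycleAux

/-- Let `Λ` be a finite simple graph of minimum degree at least 3 containing a
cycle of length `m`. Then there is a positive integer `n` such that `Λ` has an
arc-cycle of length `n` and an arc-cycle of length `m + n - 2`. -/
theorem arcCycles_of_lengths_n_and_m_add_n_sub_two {V : Type*} [Fintype V]
    (Λ : SimpleGraph V) [DecidableRel Λ.Adj] (hdeg : ∀ v : V, 3 ≤ Λ.degree v)
    (m : ℕ) (hcyc : ∃ (v : V) (c : Λ.Walk v v), c.IsCycle ∧ c.length = m) :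
    ∃ n : ℕ, 0 < n ∧ (∃ a : ℕ → V, IsArcCycle Λ n a) ∧
      ∃ b : ℕ → V, IsArcCycle Λ (m + n - 2) b := by
  classical
  obtain ⟨v, c, hcycle, hlen⟩ := hcyc
  have hm3 : 3 ≤ m := hlen ▸ hcycle.three_le_length
  set a : ℕ → V := fun i => c.getVert i with ha
  have ham : a m = a 0 := by
    simp only [ha, ← hlen, SimpleGraph.Walk.getVert_length, SimpleGraph.Walk.getVert_zero]
  have hadjA : ∀ i < m, Λ.Adj (a i) (a (i + 1)) := by
    intro i hi
    exact c.adj_getVert_succ (by omega : i < c.length)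
  have hinj : ∀ i j, 1 ≤ i → i ≤ m → 1 ≤ j → j ≤ m → a i = a j → i = j := by
    intro i j h1 h2 h3 h4 h5
    exact ArcCycleAux.cycle_getVert_inj hcycle h1 (by omega) h3 (by omega) h5
  -- choose s, a neighbour of `a 0` other than `a 1` and `a (m-1)`
  have hsex : ((Λ.neighborFinset (a 0)) \ {a 1, a (m - 1)}).Nonempty := by
    rw [← Finset.card_pos]
    have h1 := Finset.le_card_sdiff ({a 1, a (m - 1)} : Finset V) (Λ.neighborFinset (a 0))
    have h2 : ({a 1, a (m - 1)} : Finset V).card ≤ 2 :=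
      le_trans (Finset.card_insert_le _ _) (by simp)
    have h3 : 3 ≤ (Λ.neighborFinset (a 0)).card := hdeg (a 0)
    omega
  obtain ⟨s, hs⟩ := hsex
  rw [Finset.mem_sdiff, SimpleGraph.mem_neighborFinset] at hs
  obtain ⟨hs_adj, hs_not⟩ := hs
  have hs1 : s ≠ a 1 := fun h => hs_not (by simp [h])
  have hsm1 : s ≠ a (m - 1) := fun h => hs_not (by simp [h])
  -- choose t, a neighbour of `a 1` other than `a 0` and `a 2`
  have htex : ((Λ.neighborFinset (a 1)) \ {a 0, a 2}).Nonempty := by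
    rw [← Finset.card_pos]
    have h1 := Finset.le_card_sdiff ({a 0, a 2} : Finset V) (Λ.neighborFinset (a 1))
    have h2 : ({a 0, a 2} : Finset V).card ≤ 2 :=
      le_trans (Finset.card_insert_le _ _) (by simp)
    have h3 : 3 ≤ (Λ.neighborFinset (a 1)).card := hdeg (a 1)
    omega
  obtain ⟨t, ht⟩ := htex
  rw [Finset.mem_sdiff, SimpleGraph.mem_neighborFinset] at ht
  obtain ⟨ht_adj, ht_not⟩ := ht
  have ht0 : t ≠ a 0 := fun h => ht_not (by simp [h])
  have ht2 : t ≠ a 2 := fun h => ht_not (by simp [h])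
  -- the two darts and a walk connecting them
  set d : Λ.Dart := ⟨(a 0, s), hs_adj⟩ with hd
  set e : Λ.Dart := ⟨(t, a 1), ht_adj.symm⟩ with he
  have hwalk : Λ.Walk s t :=
    SimpleGraph.Walk.cons hs_adj.symm
      (SimpleGraph.Walk.cons (hadjA 0 (by omega)) (SimpleGraph.Walk.cons ht_adj SimpleGraph.Walk.nil))
  have hreach : ArcCycleAux.Reach Λ d e := ArcCycleAux.reach_of_walk hdeg hwalk d e rfl rfl
  obtain ⟨k, f, ⟨hfadj, hfnb⟩, hf0, hf1, hfk, hfk1⟩ := ArcCycleAux.exists_arc_of_reach d e hreach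
  have hf0' : f 0 = a 0 := hf0
  have hf1' : f 1 = s := hf1
  have hfk' : f k = t := hfk
  have hfk1' : f (k + 1) = a 1 := hfk1
  have hk1 : 1 ≤ k := by
    by_contra h
    have : k = 0 := by omega
    rw [this] at hfk'
    exact ht0 (hf0' ▸ hfk'.symm ▸ rfl)
  refine ⟨k + 2, by omega, ?_, ?_⟩
  · -- the arc-cycle of length n = k + 2 : close f with the edge a1 → a0
    refine ⟨fun i => if i = k + 2 then a 0 else f i, ?_, ⟨?_, ?_⟩, ?_, ?_⟩
    · omega
    · intro i hi
      by_cases hik : i < k + 1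
      · have e1 : i ≠ k + 2 := by omega
        have e2 : i + 1 ≠ k + 2 := by omega
        simp only [if_neg e1, if_neg e2]
        exact hfadj i hik
      · have e1 : ¬ (i = k + 2) := by omega
        have e2 : i + 1 = k + 2 := by omega
        have e3 : i = k + 1 := by omega
        simp only [if_neg e1, if_pos e2]
        rw [e3, hfk1']
        exact (hadjA 0 (by omega)).symm
    · intro i hi
      by_cases hik : i + 2 ≤ k + 1
      · have e1 : i ≠ k + 2 := by omega
        have e2 : i + 2 ≠ k + 2 := by omega
        simp only [if_neg e1, if_neg e2]
        exact hfnb i hik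
      · have e1 : i + 2 = k + 2 := by omega
        have e2 : ¬ (i = k + 2) := by omega
        have e3 : i = k := by omega
        simp only [if_pos e1, if_neg e2]
        rw [e3, hfk']
        exact fun h => ht0 h.symm
    · have e1 : ¬ ((0 : ℕ) = k + 2) := by omega
      simp [e1, hf0']
    · have e1 : k + 2 - 1 = k + 1 := by omega
      have e2 : k + 1 ≠ k + 2 := by omega
      have e3 : (1 : ℕ) ≠ k + 2 := by omega
      rw [e1]
      simp only [if_neg e2, if_neg e3, hfk1', hf1']
      exact fun h => hs1 h.symm
  · -- the arc-cycle of length m + k = m + n - 2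
    have harith : m + (k + 2) - 2 = m + k := by omega
    rw [harith]
    refine ⟨fun j => if j < m then a (j + 1) else f (j - (m - 1)), ?_, ⟨?_, ?_⟩, ?_, ?_⟩
    · omega
    · intro i hi
      by_cases h1 : i + 1 < m
      · have e1 : i < m := by omega
        simp only [if_pos e1, if_pos h1]
        exact hadjA (i + 1) (by omega)
      · by_cases h2 : i < m
        · -- i = m - 1
          have e2 : ¬ (i + 1 < m) := h1
          have hi' : i = m - 1 := by omega
          simp only [if_pos h2, if_neg e2]
          have ea : i + 1 = m := by omega
          have eb : i + 1 - (m - 1) = 1 := by omega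
          rw [eb, ea, ham, ← hf0']
          exact hfadj 0 (by omega)
        · have e2 : ¬ (i + 1 < m) := by omega
          simp only [if_neg h2, if_neg e2]
          have ea : i + 1 - (m - 1) = (i - (m - 1)) + 1 := by omega
          rw [ea]
          exact hfadj (i - (m - 1)) (by omega)
    · intro i hi
      by_cases h1 : i + 2 < m
      · have e1 : i < m := by omega
        simp only [if_pos e1, if_pos h1]
        intro hcontra
        have := hinj (i + 3) (i + 1) (by omega) ?_ (by omega) (by omega) hcontra
        · omega
        · omega
      · by_cases h2 : i < m
        · simp only [if_pos h2, if_neg h1]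
          by_cases h3 : i + 2 = m
          · -- compares f 1 = s with a (m - 1)
            have ea : i + 2 - (m - 1) = 1 := by omega
            have eb : i + 1 = m - 1 := by omega
            rw [ea, eb, hf1']
            exact hsm1
          · -- i = m - 1 : compares f 2 with a m = a 0 = f 0
            have hi' : i = m - 1 := by omega
            have ea : i + 2 - (m - 1) = 2 := by omega
            have eb : i + 1 = m := by omega
            rw [ea, eb, ham, ← hf0']
            exact hfnb 0 (by omega)
        · have e2 : ¬ (i + 2 < m) := by omega
          simp only [if_neg h2, if_neg e2]
          have ea : i + 2 - (m - 1) = (i - (m - 1)) + 2 := by omega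
          rw [ea]
          exact hfnb (i - (m - 1)) (by omega)
    · have e1 : ¬ (m + k < m) := by omega
      have e2 : (0 : ℕ) < m := by omega
      simp only [if_neg e1, if_pos e2]
      have ea : m + k - (m - 1) = k + 1 := by omega
      rw [ea, hfk1']
    · have e1 : ¬ (m + k - 1 < m) := by omega
      have e2 : (1 : ℕ) < m := by omega
      simp only [if_neg e1, if_pos e2]
      have ea : m + k - 1 - (m - 1) = k := by omega
      rw [ea, hfk']
      exact ht2
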